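/- Let g₁,…,g_r ∈ ℝ[x₁,…,xₙ] be μ-strongly concave polynomials (μ > 0), i.e., g_i(y) ≤ g_i(x) + ⟨y-x, ∇g_i(x)⟩ - (μ/2)|y-x|² for all x,y, and let X = {x : g₁(x) ≥ 0, …, g_r(x) ≥ 0} be nonempty. Then for every η > 0, setting δ₀ = η²μ/2, for every 0 < δ ≤ δ₀ and every x with g_i(x) ≥ -δ for all i, we have dist(x, X) ≤ η. -/

import Mathlib

/-- If `g₁,…,g_r` are `μ`-strongly concave polynomials and
`X = {x : g₁(x) ≥ 0, …, g_r(x) ≥ 0}` is nonempty, then for every `η > 0` and every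
`0 < δ ≤ η²μ/2`, any `x` with `g_i(x) ≥ -δ` for all `i` satisfies `dist(x, X) ≤ η`. -/
theorem stmt_18 (n r : ℕ) (g : Fin r → MvPolynomial (Fin n) ℝ) (μ : ℝ) (hμ : 0 < μ)
    (hconc : ∀ i : Fin r, ∀ x y : EuclideanSpace ℝ (Fin n),
      MvPolynomial.eval (fun j => y j) (g i) ≤
        MvPolynomial.eval (fun j => x j) (g i) +
          (inner ℝ (y - x)
            (gradient (fun z : EuclideanSpace ℝ (Fin n) =>
              MvPolynomial.eval (fun j => z j) (g i)) x) : ℝ) -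
          μ / 2 * ‖y - x‖ ^ 2)
    (X : Set (EuclideanSpace ℝ (Fin n)))
    (hX : X = {x | ∀ i : Fin r, 0 ≤ MvPolynomial.eval (fun j => x j) (g i)})
    (hXne : X.Nonempty)
    (η : ℝ) (hη : 0 < η) (δ : ℝ) (hδ0 : 0 < δ) (hδ : δ ≤ η ^ 2 * μ / 2)
    (x : EuclideanSpace ℝ (Fin n))
    (hx : ∀ i : Fin r, -δ ≤ MvPolynomial.eval (fun j => x j) (g i)) :
    Metric.infDist x X ≤ η := by
  obtain ⟨y, hy⟩ := hXne
  have hyX : ∀ i : Fin r, 0 ≤ MvPolynomial.eval (fun j => y j) (g i) := by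
    rw [hX] at hy; exact hy
  set d : EuclideanSpace ℝ (Fin n) := y - x with hd
  by_cases hD : ‖d‖ ≤ η
  · calc Metric.infDist x X ≤ dist x y := Metric.infDist_le_dist_of_mem hy
      _ = ‖d‖ := by rw [dist_eq_norm, hd, ← norm_neg]; congr 1; abel
      _ ≤ η := hD
  · push_neg at hD
    have hDpos : 0 < ‖d‖ := lt_trans hη hD
    set s : ℝ := η / ‖d‖ with hs
    have hsD : s * ‖d‖ = η := div_mul_cancel₀ η (ne_of_gt hDpos)
    have hs0 : 0 < s := div_pos hη hDpos
    have hs1 : s < 1 := (div_lt_one hDpos).2 hD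
    set z : EuclideanSpace ℝ (Fin n) := x + s • d with hz
    have hxz : x - z = (-s) • d := by rw [hz]; module
    have hyz : y - z = (1 - s) • d := by rw [hz, hd]; module
    have hnxz : ‖x - z‖ = s * ‖d‖ := by
      rw [hxz, norm_smul, Real.norm_eq_abs, abs_neg, abs_of_pos hs0]
    have hnyz : ‖y - z‖ = (1 - s) * ‖d‖ := by
      rw [hyz, norm_smul, Real.norm_eq_abs, abs_of_pos (by linarith)]
    have hzX : z ∈ X := by
      rw [hX]; intro i
      have h1 := hconc i z x
      have h2 := hconc i z y
      rw [hxz, real_inner_smul_left, norm_smul, Real.norm_eq_abs, abs_neg,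
        abs_of_pos hs0] at h1
      rw [hyz, real_inner_smul_left, norm_smul, Real.norm_eq_abs,
        abs_of_pos (by linarith : (0:ℝ) < 1 - s)] at h2
      set Gz := MvPolynomial.eval (fun j => z j) (g i)
      set Gx := MvPolynomial.eval (fun j => x j) (g i)
      set Gy := MvPolynomial.eval (fun j => y j) (g i)
      set ip : ℝ := inner ℝ d (gradient (fun w : EuclideanSpace ℝ (Fin n) =>
        MvPolynomial.eval (fun j => w j) (g i)) z)
      have hGx := hx i
      have hGy := hyX i
      have h1' := mul_le_mul_of_nonneg_left h1 (by linarith : (0:ℝ) ≤ 1 - s)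
      have h2' := mul_le_mul_of_nonneg_left h2 hs0.le
      have hring : (1 - s) * (Gz + -s * ip - μ / 2 * (s * ‖d‖) ^ 2) +
          s * (Gz + (1 - s) * ip - μ / 2 * ((1 - s) * ‖d‖) ^ 2) =
          Gz - μ / 2 * (s * (1 - s) * ‖d‖ ^ 2) := by ring
      have key : s * Gy + (1 - s) * Gx ≤ Gz - μ / 2 * (s * (1 - s) * ‖d‖ ^ 2) := by
        linarith
      have hηD : δ ≤ μ / 2 * (s * ‖d‖ ^ 2) := by
        have heq : μ / 2 * (s * ‖d‖ ^ 2) = μ / 2 * (η * ‖d‖) := by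
          rw [← hsD]; ring
        rw [heq]
        calc δ ≤ η ^ 2 * μ / 2 := hδ
          _ = μ / 2 * (η * η) := by ring
          _ ≤ μ / 2 * (η * ‖d‖) := by
              have := hD.le
              gcongr
      have hfin := mul_le_mul_of_nonneg_left hηD (by linarith : (0:ℝ) ≤ 1 - s)
      have hring2 : (1 - s) * (μ / 2 * (s * ‖d‖ ^ 2)) =
          μ / 2 * (s * (1 - s) * ‖d‖ ^ 2) := by ring
      have hGy' : 0 ≤ s * Gy := mul_nonneg hs0.le hGy
      have hGx' : (1 - s) * (-δ) ≤ (1 - s) * Gx :=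
        mul_le_mul_of_nonneg_left hGx (by linarith)
      nlinarith [key]
    calc Metric.infDist x X ≤ dist x z := Metric.infDist_le_dist_of_mem hzX
      _ = ‖x - z‖ := dist_eq_norm x z
      _ = η := by rw [hnxz, hsD]
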